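/- Let X be a Banach space and let u : [0,∞) → X be continuously differentiable. Then for every σ > 0 one has u(0) = σ^{-1} ∫₀^σ u(τ) dτ − ∫₀^σ t^{-2} ∫₀^t (u(t) − u(τ)) dτ dt, where all integrals are Bochner integrals. -/

import Mathlib

open MeasureTheory Set

/-- The trace identity (3.8): for a continuously differentiable `u : [0,∞) → X`
and every `σ > 0`,
`u(0) = σ⁻¹ ∫₀^σ u(τ) dτ − ∫₀^σ t⁻² ∫₀^t (u(t) − u(τ)) dτ dt`. -/
theorem trace_identity
    {X : Type*} [NormedAddCommGroup X] [NormedSpace ℝ X] [CompleteSpace X]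
    (u : ℝ → X) (hu : ContDiff ℝ 1 u) (σ : ℝ) (hσ : 0 < σ) :
    u 0 = σ⁻¹ • (∫ τ in Ioo (0 : ℝ) σ, u τ)
      - ∫ t in Ioo (0 : ℝ) σ, (t ^ 2)⁻¹ • ∫ τ in Ioo (0 : ℝ) t, (u t - u τ) := by
  have hucont : Continuous u := hu.continuous
  set F : ℝ → X := fun t => ∫ τ in (0:ℝ)..t, u τ with hFdef
  have hF : ∀ t, HasDerivAt F (u t) t := fun t =>
    (hucont.integral_hasStrictDerivAt 0 t).hasDerivAt
  have hF0 : F 0 = 0 := intervalIntegral.integral_same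
  have hFcont : Continuous F := continuous_iff_continuousAt.2 fun t => (hF t).continuousAt
  -- F as a set integral
  have hFset : ∀ t : ℝ, 0 ≤ t → F t = ∫ τ in Ioo (0:ℝ) t, u τ := by
    intro t ht
    rw [hFdef]
    simp only
    rw [intervalIntegral.integral_of_le ht, integral_Ioc_eq_integral_Ioo]
  -- inner integral identity
  have hInner : ∀ t : ℝ, 0 < t →
      (∫ τ in Ioo (0:ℝ) t, (u t - u τ)) = t • u t - F t := by
    intro t ht
    have hInt : IntegrableOn u (Ioo 0 t) :=
      (hucont.integrableOn_Icc (a := 0) (b := t)).mono_set Ioo_subset_Icc_self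
    have hc : IntegrableOn (fun _ : ℝ => u t) (Ioo 0 t) := by
      refine integrableOn_const ?_
      simp [Real.volume_Ioo]
    rw [integral_sub hc hInt, setIntegral_const, hFset t ht.le,
      Real.volume_real_Ioo_of_le ht.le, sub_zero]
  -- Lipschitz bound
  obtain ⟨C, hC⟩ := (isCompact_Icc (a := (0:ℝ)) (b := σ)).exists_bound_of_continuousOn
    ((hu.continuous_deriv le_rfl).continuousOn)
  have hC0 : 0 ≤ C := le_trans (norm_nonneg _) (hC 0 ⟨le_rfl, hσ.le⟩)
  have hLip : ∀ x ∈ Icc (0:ℝ) σ, ∀ y ∈ Icc (0:ℝ) σ, ‖u y - u x‖ ≤ C * ‖y - x‖ := by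
    intro x hx y hy
    exact (convex_Icc 0 σ).norm_image_sub_le_of_norm_deriv_le
      (fun z _ => hu.differentiable one_ne_zero z) hC hx hy
  -- the derivative function
  set h' : ℝ → X := fun t => (t^2)⁻¹ • (t • u t - F t) with hh'def
  -- bound on h'
  have hbound : ∀ t ∈ Ioc (0:ℝ) σ, ‖h' t‖ ≤ C := by
    intro t ht
    have ht0 : (0:ℝ) < t := ht.1
    have h1 : ‖t • u t - F t‖ ≤ (C * t) * t := by
      rw [← hInner t ht0]
      have := norm_setIntegral_le_of_norm_le_const (μ := volume)
        (s := Ioo (0:ℝ) t) (f := fun τ => u t - u τ) (C := C * t)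
        (by simp [Real.volume_Ioo]) ?_
      · calc ‖∫ τ in Ioo (0:ℝ) t, (u t - u τ)‖ ≤ (C * t) * (volume (Ioo (0:ℝ) t)).toReal := this
          _ = (C * t) * t := by rw [Real.volume_Ioo, sub_zero, ENNReal.toReal_ofReal ht0.le]
      · intro τ hτ
        have hτI : τ ∈ Icc (0:ℝ) σ := ⟨hτ.1.le, hτ.2.le.trans ht.2⟩
        have htI : t ∈ Icc (0:ℝ) σ := ⟨ht0.le, ht.2⟩
        calc ‖u t - u τ‖ ≤ C * ‖t - τ‖ := hLip τ hτI t htI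
          _ ≤ C * t := by
              have : ‖t - τ‖ ≤ t := by
                rw [Real.norm_eq_abs, abs_of_nonneg (by linarith [hτ.2.le])]
                linarith [hτ.1.le]
              exact mul_le_mul_of_nonneg_left this hC0
    rw [hh'def]
    simp only
    rw [norm_smul, Real.norm_eq_abs, abs_of_nonneg (inv_nonneg.2 (sq_nonneg t))]
    calc (t^2)⁻¹ * ‖t • u t - F t‖ ≤ (t^2)⁻¹ * ((C * t) * t) := by
          exact mul_le_mul_of_nonneg_left h1 (inv_nonneg.2 (sq_nonneg t))
      _ = C := by field_simp
  -- integrability of h'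
  have hmeas : ContinuousOn h' (Ioc (0:ℝ) σ) := by
    apply ContinuousOn.smul
    · exact ((continuousOn_id.pow 2).inv₀ fun t ht => pow_ne_zero 2 (ne_of_gt ht.1))
    · exact (continuousOn_id.smul hucont.continuousOn).sub hFcont.continuousOn
  have hIntOn : IntegrableOn h' (Ioc (0:ℝ) σ) := by
    refine Integrable.mono' (g := fun _ => C) ?_ ?_ ?_
    · exact integrableOn_const (by simp [Real.volume_Ioc])
    · exact hmeas.aestronglyMeasurable measurableSet_Ioc
    · exact (ae_restrict_iff' measurableSet_Ioc).2 (Filter.Eventually.of_forall hbound)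
  have hInt : IntervalIntegrable h' volume 0 σ := by
    rw [intervalIntegrable_iff, uIoc_of_le hσ.le]; exact hIntOn
  -- the function G
  set G : ℝ → X := fun t => if t = 0 then u 0 else t⁻¹ • F t with hGdef
  have hG0 : G 0 = u 0 := by simp [hGdef]
  have hGpos : ∀ t : ℝ, t ≠ 0 → G t = t⁻¹ • F t := fun t ht => by simp [hGdef, ht]
  -- derivative of G on (0, σ)
  have hGderiv : ∀ t ∈ Ioo (0:ℝ) σ, HasDerivWithinAt G (h' t) (Ioi t) t := by
    intro t ht
    have ht0 : t ≠ 0 := ne_of_gt ht.1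
    have hd : HasDerivAt (fun s : ℝ => s⁻¹ • F s) (t⁻¹ • u t + (-(t^2)⁻¹) • F t) t :=
      (hasDerivAt_inv ht0).smul (hF t)
    have hkey : h' t = t⁻¹ • u t + (-(t^2)⁻¹) • F t := by
      rw [hh'def]
      simp only
      rw [smul_sub, smul_smul, neg_smul, ← sub_eq_add_neg]
      congr 2
      field_simp
    have hev : G =ᶠ[nhds t] fun s : ℝ => s⁻¹ • F s := by
      filter_upwards [eventually_ne_nhds ht0] with s hs
      exact hGpos s hs
    rw [hkey]
    exact (hd.congr_of_eventuallyEq hev).hasDerivWithinAt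
  -- continuity of G on [0, σ]
  have hGcont : ContinuousOn G (Icc 0 σ) := by
    intro t ht
    by_cases h0 : t = 0
    · subst h0
      rw [← continuousWithinAt_diff_self]
      have hd : HasDerivWithinAt F (u 0) (Icc 0 σ) 0 := (hF 0).hasDerivWithinAt
      have hslope := hasDerivWithinAt_iff_tendsto_slope.1 hd
      have : Filter.Tendsto G (nhdsWithin 0 (Icc 0 σ \ {0})) (nhds (u 0)) := by
        refine hslope.congr' ?_
        filter_upwards [eventually_mem_nhdsWithin] with s hs
        rw [slope_def_module, hF0, sub_zero, sub_zero, hGpos s hs.2]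
      rw [ContinuousWithinAt, hG0]
      exact this
    · have hct : ContinuousAt (fun s : ℝ => s⁻¹ • F s) t :=
        (continuousAt_inv₀ h0).smul hFcont.continuousAt
      refine hct.continuousWithinAt.congr_of_eventuallyEq ?_ (hGpos t h0)
      filter_upwards [Filter.Eventually.filter_mono nhdsWithin_le_nhds
        (eventually_ne_nhds h0)] with s hs
      exact hGpos s hs
  -- FTC
  have hFTC : ∫ t in (0:ℝ)..σ, h' t = G σ - G 0 :=
    intervalIntegral.integral_eq_sub_of_hasDeriv_right_of_le hσ.le hGcont hGderiv hInt
  have hGσ : G σ = σ⁻¹ • F σ := hGpos σ (ne_of_gt hσ)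
  -- rewrite goal
  have e1 : (∫ τ in Ioo (0:ℝ) σ, u τ) = F σ := (hFset σ hσ.le).symm
  have e2 : (∫ t in Ioo (0:ℝ) σ, (t ^ 2)⁻¹ • ∫ τ in Ioo (0 : ℝ) t, (u t - u τ))
      = ∫ t in (0:ℝ)..σ, h' t := by
    rw [intervalIntegral.integral_of_le hσ.le, integral_Ioc_eq_integral_Ioo]
    refine setIntegral_congr_fun measurableSet_Ioo fun t ht => ?_
    rw [hh'def]
    simp only
    rw [hInner t ht.1]
  rw [e1, e2, hFTC, hGσ, hG0]
  abel
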